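/- arXiv:2409.08480 — 2 statements merged into one kernel-verified Lean document; each statement's English description precedes it below -/
import Mathlib

section
/- Let 0 < A₁ ≤ A₂ and σ ≥ 1. There exists a constant C > 0, depending only on σ and A₂/A₁, with the following property. Let T ⊂ ℝ² be a closed triangle with diameter h_T ≤ 1 and inradius ρ_T satisfying h_T ≤ σ ρ_T. Let L be a straight line that meets the interior of T and divides T into two open pieces T₁ and T₂, with unit normal n of L pointing from T₁ into T₂. Let w : T → ℝ be continuous, such that the restriction of w to the closure of each Tᵢ is an affine function, and such that the flux condition A₁ ∇(w|_{T₁}) · n = A₂ ∇(w|_{T₂}) · n holds. Then for every edge e of T, ∫_e ‖∇w‖² dH¹ ≤ C h_T^{-2} ∫_T ‖∇w‖² dx, where on e ∩ cl(Tᵢ) the gradient ∇w denotes the (constant) gradient of the affine piece w|_{Tᵢ}, the edge integral is with respect to the one-dimensional Hausdorff measure H¹, and the area integral is with respect to Lebesgue measure on ℝ². -/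
open MeasureTheory RealInnerProductSpace

set_option maxHeartbeats 1600000

/-- Trace/inverse inequality for degree-one immersed finite element functions on an
interface triangle (Lemma 4.1): there is `C = C(σ, A₂/A₁)`, independent of the triangle
`T`, the cutting line `L` and the function `w`, such that for every shape-regular
triangle `T` of diameter `h_T ≤ 1` cut by a line `L = {x : ⟪x, n⟫ = c}` into two pieces,
and every continuous piecewise-affine `w` on `T` satisfying the flux condition
`A₁ ∇w₁·n = A₂ ∇w₂·n`, every edge `e` of `T` satisfies
`∫_e ‖∇w‖² dH¹ ≤ C h_T⁻² ∫_T ‖∇w‖² dx`. -/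
theorem stmt_1 (A₁ A₂ σ : ℝ) (hA₁ : 0 < A₁) (hA : A₁ ≤ A₂) (hσ : 1 ≤ σ) :
    ∃ C > 0, ∀ (P : Fin 3 → EuclideanSpace ℝ (Fin 2)), AffineIndependent ℝ P →
      ∀ T : Set (EuclideanSpace ℝ (Fin 2)), T = convexHull ℝ (Set.range P) →
      Metric.diam T ≤ 1 →
      -- shape regularity: an inscribed closed ball of radius `ρ` with `h_T ≤ σ ρ`
      (∀ (z : EuclideanSpace ℝ (Fin 2)) (ρ : ℝ), Metric.closedBall z ρ ⊆ T →
        Metric.diam T ≤ σ * ρ →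
      -- the line `L = {x : ⟪x, n⟫ = c}`, with unit normal `n`, meets the interior of
      -- `T`, cutting it into the two pieces `{x ∈ T : ⟪x, n⟫ < c}` (the piece `T₁`)
      -- and `{x ∈ T : ⟪x, n⟫ > c}` (the piece `T₂`)
      ∀ (n : EuclideanSpace ℝ (Fin 2)) (c : ℝ), ‖n‖ = 1 →
        (∃ x ∈ interior T, ⟪x, n⟫ = c) →
      -- `w` is continuous on `T` and affine on the closure of each piece, with
      -- one-sided gradients `g₁` (on `T₁`) and `g₂` (on `T₂`)
      ∀ (w : EuclideanSpace ℝ (Fin 2) → ℝ) (g₁ g₂ : EuclideanSpace ℝ (Fin 2)) (b₁ b₂ : ℝ),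
        ContinuousOn w T →
        (∀ x ∈ T, ⟪x, n⟫ ≤ c → w x = ⟪g₁, x⟫ + b₁) →
        (∀ x ∈ T, c ≤ ⟪x, n⟫ → w x = ⟪g₂, x⟫ + b₂) →
        -- the flux condition `A₁ ∇w₁ · n = A₂ ∇w₂ · n`
        A₁ * ⟪g₁, n⟫ = A₂ * ⟪g₂, n⟫ →
      -- conclusion, for every edge `e = [P i, P j]` of `T`
      ∀ i j : Fin 3, i ≠ j →
        (∫ x in segment ℝ (P i) (P j),
            ‖(if ⟪x, n⟫ ≤ c then g₁ else g₂)‖ ^ 2 ∂μH[1]) ≤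
          C * (Metric.diam T)⁻¹ ^ 2 *
            ∫ x in T, ‖(if ⟪x, n⟫ ≤ c then g₁ else g₂)‖ ^ 2) := by
  refine ⟨(A₂ / A₁) ^ 2 * σ ^ 2, mul_pos (pow_pos (div_pos (lt_of_lt_of_le hA₁ hA) hA₁) 2)
    (pow_pos (lt_of_lt_of_le one_pos hσ) 2), ?_⟩
  intro P hP T hT hdiam1 z ρ hball hσρ n c hn hline w g₁ g₂ b₁ b₂ hwc hw1 hw2 hflux i j hij
  set K : ℝ := (A₂ / A₁) ^ 2 with hK
  set C : ℝ := K * σ ^ 2 with hC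
  set h : ℝ := Metric.diam T with hh
  set f : EuclideanSpace ℝ (Fin 2) → ℝ := fun x => ‖(if ⟪x, n⟫ ≤ c then g₁ else g₂)‖ ^ 2 with hf
  -- basic facts about T
  have hTcomp : IsCompact T := hT ▸ (Set.finite_range P).isCompact_convexHull (𝕜 := ℝ)
  have hTbdd : Bornology.IsBounded T := hTcomp.isBounded
  have hPT : ∀ k, P k ∈ T := fun k => hT ▸ subset_convexHull ℝ _ ⟨k, rfl⟩
  have hP01 : P 0 ≠ P 1 := fun hEq => by
    have := hP.injective hEq; exact absurd this (by decide)
  have hpos : 0 < h := lt_of_lt_of_le (dist_pos.2 hP01)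
    (Metric.dist_le_diam_of_mem hTbdd (hPT 0) (hPT 1))
  have hσ0 : (0:ℝ) < σ := lt_of_lt_of_le one_pos hσ
  have hρpos : 0 < ρ := by
    have hσρ0 : 0 < σ * ρ := lt_of_lt_of_le hpos hσρ
    rcases mul_pos_iff.1 hσρ0 with h1 | h1
    · exact h1.2
    · exact absurd h1.1 (asymm hσ0)
  -- the tangent vector m
  set m : EuclideanSpace ℝ (Fin 2) := (WithLp.equiv 2 (Fin 2 → ℝ)).symm ![-(n 1), n 0] with hm
  have hm0 : m 0 = -(n 1) := rfl
  have hm1 : m 1 = n 0 := rfl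
  have hn2 : n 0 ^ 2 + n 1 ^ 2 = 1 := by
    have h2 := real_inner_self_eq_norm_sq n
    rw [hn] at h2
    simp only [PiLp.inner_apply, RCLike.inner_apply, conj_trivial, Fin.sum_univ_two] at h2
    linear_combination h2
  have hmn : ⟪m, n⟫ = 0 := by
    simp only [PiLp.inner_apply, RCLike.inner_apply, conj_trivial, Fin.sum_univ_two, hm0, hm1]
    ring
  have hmnorm : ‖m‖ = 1 := by
    rw [EuclideanSpace.norm_eq]
    simp only [Fin.sum_univ_two, hm0, hm1, Real.norm_eq_abs, sq_abs]
    rw [show (-(n 1)) ^ 2 + (n 0) ^ 2 = 1 by linear_combination hn2]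
    exact Real.sqrt_one
  -- Parseval: for all v, ‖v‖² = ⟪v,n⟫² + ⟪v,m⟫²
  have parseval : ∀ v : EuclideanSpace ℝ (Fin 2), ‖v‖ ^ 2 = ⟪v, n⟫ ^ 2 + ⟪v, m⟫ ^ 2 := by
    intro v
    rw [← real_inner_self_eq_norm_sq]
    simp only [PiLp.inner_apply, RCLike.inner_apply, conj_trivial, Fin.sum_univ_two, hm0, hm1]
    linear_combination (-(v 0 * v 0) - v 1 * v 1) * hn2
  -- tangential continuity: ⟪g₁, m⟫ = ⟪g₂, m⟫
  obtain ⟨x₀, hx₀int, hx₀c⟩ := hline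
  obtain ⟨ε, hε, hballx⟩ := Metric.isOpen_iff.1 isOpen_interior x₀ hx₀int
  have hx₀T : x₀ ∈ T := interior_subset hx₀int
  have hxmem : x₀ + (ε/2) • m ∈ T := by
    apply interior_subset
    apply hballx
    rw [Metric.mem_ball, dist_eq_norm]
    simp only [add_sub_cancel_left]
    rw [norm_smul, hmnorm]
    simp only [mul_one, Real.norm_eq_abs]
    rw [abs_of_pos (half_pos hε)]
    linarith only [hε]
  have hxc : ⟪x₀ + (ε/2) • m, n⟫ = c := by
    rw [inner_add_left, real_inner_smul_left, hmn, mul_zero, add_zero, hx₀c]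
  have htan : ⟪g₁, m⟫ = ⟪g₂, m⟫ := by
    have e0a := hw1 x₀ hx₀T (le_of_eq hx₀c)
    have e0b := hw2 x₀ hx₀T (ge_of_eq hx₀c)
    have e1a := hw1 _ hxmem (le_of_eq hxc)
    have e1b := hw2 _ hxmem (ge_of_eq hxc)
    have e0 : ⟪g₁, x₀⟫ + b₁ = ⟪g₂, x₀⟫ + b₂ := by rw [← e0a, ← e0b]
    have e1 : ⟪g₁, x₀ + (ε/2) • m⟫ + b₁ = ⟪g₂, x₀ + (ε/2) • m⟫ + b₂ := by rw [← e1a, ← e1b]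
    rw [inner_add_right, inner_add_right, real_inner_smul_right, real_inner_smul_right] at e1
    have hε2 : ε / 2 ≠ 0 := (half_pos hε).ne'
    have h3 : (ε/2) * ⟪g₁, m⟫ = (ε/2) * ⟪g₂, m⟫ := by linear_combination e1 - e0
    exact mul_left_cancel₀ hε2 h3
  -- norm comparison between the two gradients
  have hA₂ : 0 < A₂ := lt_of_lt_of_le hA₁ hA
  have hs : ⟪g₁, n⟫ ^ 2 = K * ⟪g₂, n⟫ ^ 2 := by
    have h2 : A₁ ^ 2 * ⟪g₁, n⟫ ^ 2 = A₂ ^ 2 * ⟪g₂, n⟫ ^ 2 := by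
      linear_combination (A₁ * ⟪g₁, n⟫ + A₂ * ⟪g₂, n⟫) * hflux
    rw [hK, div_pow, div_mul_eq_mul_div, eq_div_iff (pow_ne_zero 2 hA₁.ne')]
    linear_combination h2
  have hdiv1 : (1:ℝ) ≤ A₂ / A₁ := (one_le_div hA₁).2 hA
  have hK1 : 1 ≤ K := by
    rw [hK]
    calc (1:ℝ) = 1 ^ 2 := by norm_num
      _ ≤ (A₂ / A₁) ^ 2 := pow_le_pow_left₀ zero_le_one hdiv1 2
  have hK0 : (0:ℝ) ≤ K := zero_le_one.trans hK1
  have hg21 : ‖g₂‖ ^ 2 ≤ ‖g₁‖ ^ 2 := by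
    rw [parseval g₁, parseval g₂, htan, hs]
    exact add_le_add_left (le_mul_of_one_le_left (sq_nonneg _) hK1) _
  have hg12 : ‖g₁‖ ^ 2 ≤ K * ‖g₂‖ ^ 2 := by
    rw [parseval g₁, parseval g₂, htan, hs, mul_add]
    exact add_le_add_right (le_mul_of_one_le_left (sq_nonneg _) hK1) _
  set M : ℝ := ‖g₁‖ ^ 2 with hM
  set m₂ : ℝ := ‖g₂‖ ^ 2 with hm₂
  have hMnn : 0 ≤ M := hM ▸ sq_nonneg _
  have hm₂nn : 0 ≤ m₂ := hm₂ ▸ sq_nonneg _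
  -- measurability of the integrand
  have hcont : Continuous fun x : EuclideanSpace ℝ (Fin 2) => ⟪x, n⟫ :=
    Continuous.inner continuous_id continuous_const
  have hsetm : MeasurableSet {x : EuclideanSpace ℝ (Fin 2) | ⟪x, n⟫ ≤ c} :=
    (isClosed_le hcont continuous_const).measurableSet
  have hfmeas : Measurable f := by
    have h2 : Measurable fun x : EuclideanSpace ℝ (Fin 2) => if ⟪x, n⟫ ≤ c then g₁ else g₂ :=
      Measurable.ite hsetm measurable_const measurable_const
    exact h2.norm.pow_const 2
  have hfub : ∀ x, f x ≤ M := by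
    intro x
    rw [hf]
    dsimp only
    split
    · exact le_refl M
    · exact hg21
  have hflb : ∀ x, m₂ ≤ f x := by
    intro x
    rw [hf]
    dsimp only
    split
    · exact hg21
    · exact le_refl m₂
  have hfnn : ∀ x, 0 ≤ f x := fun x => le_trans hm₂nn (hflb x)
  -- LHS bound
  set L : ℝ := ∫ x in segment ℝ (P i) (P j), f x ∂μH[1] with hL
  have hsegfin : μH[1] (segment ℝ (P i) (P j)) < ⊤ := by
    rw [hausdorffMeasure_segment]
    exact edist_lt_top _ _
  have hLbound : L ≤ M * h := by
    have hb : ∀ x ∈ segment ℝ (P i) (P j), ‖f x‖ ≤ M := by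
      intro x _
      rw [Real.norm_of_nonneg (hfnn x)]
      exact hfub x
    have h1 : ‖L‖ ≤ M * (μH[1] (segment ℝ (P i) (P j))).toReal :=
      norm_setIntegral_le_of_norm_le_const hsegfin hb
    rw [Real.norm_eq_abs] at h1
    have h2 : (μH[1] (segment ℝ (P i) (P j))).toReal = dist (P i) (P j) := by
      rw [hausdorffMeasure_segment, ← dist_edist]
    have h3 : dist (P i) (P j) ≤ h :=
      Metric.dist_le_diam_of_mem hTbdd (hPT i) (hPT j)
    calc L ≤ |L| := le_abs_self L
      _ ≤ M * (μH[1] (segment ℝ (P i) (P j))).toReal := h1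
      _ = M * dist (P i) (P j) := by rw [h2]
      _ ≤ M * h := mul_le_mul_of_nonneg_left h3 hMnn
  -- RHS bound
  set R : ℝ := ∫ x in T, f x with hR
  have hTmeas : MeasurableSet T := hTcomp.isClosed.measurableSet
  have hvolT : volume T ≠ ⊤ := hTcomp.measure_lt_top.ne
  have hint : IntegrableOn f T := by
    apply Integrable.mono' (g := fun _ => M)
    · exact integrableOn_const hTcomp.measure_lt_top.ne
    · exact hfmeas.aestronglyMeasurable
    · filter_upwards with x
      rw [Real.norm_of_nonneg (hfnn x)]
      exact hfub x
  have hRlb : m₂ * (volume T).toReal ≤ R :=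
    setIntegral_ge_of_const_le_real hTmeas hvolT (fun x _ => hflb x) hint
  -- volume lower bound via the inscribed ball
  have hballvol : volume (Metric.closedBall z ρ) = ENNReal.ofReal (ρ ^ 2 * Real.pi) := by
    rw [EuclideanSpace.volume_closedBall]
    rw [Fintype.card_fin]
    rw [show ((2:ℕ):ℝ) / 2 + 1 = 2 by norm_num]
    rw [Real.Gamma_two, Real.sq_sqrt Real.pi_nonneg]
    rw [← ENNReal.ofReal_pow hρpos.le, ← ENNReal.ofReal_mul (by positivity)]
    norm_num
  have hvol : Real.pi * ρ ^ 2 ≤ (volume T).toReal := by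
    have hmono : ENNReal.ofReal (ρ ^ 2 * Real.pi) ≤ volume T := by
      rw [← hballvol]
      exact measure_mono hball
    have h2 := ENNReal.toReal_mono hvolT hmono
    rwa [ENNReal.toReal_ofReal (by positivity), mul_comm] at h2
  -- combine
  have hXR : m₂ * (Real.pi * ρ ^ 2) ≤ R :=
    le_trans (mul_le_mul_of_nonneg_left hvol hm₂nn) hRlb
  have hρh : h ^ 2 ≤ σ ^ 2 * ρ ^ 2 := by
    calc h ^ 2 ≤ (σ * ρ) ^ 2 := pow_le_pow_left₀ hpos.le hσρ 2
      _ = σ ^ 2 * ρ ^ 2 := mul_pow σ ρ 2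
  have hπ : (1:ℝ) ≤ Real.pi := le_trans (by norm_num) Real.pi_gt_three.le
  have step : M * h * h ^ 2 ≤ C * (m₂ * (Real.pi * ρ ^ 2)) := by
    have s1 : M * h * h ^ 2 ≤ M * h ^ 2 := by
      have e : M * h * h ^ 2 = M * h ^ 2 * h := by ring
      rw [e]
      exact mul_le_of_le_one_right (mul_nonneg hMnn (sq_nonneg h)) hdiam1
    have s2 : M * h ^ 2 ≤ K * m₂ * (σ ^ 2 * ρ ^ 2) :=
      mul_le_mul hg12 hρh (sq_nonneg h) (mul_nonneg hK0 hm₂nn)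
    have s3 : K * m₂ * (σ ^ 2 * ρ ^ 2) ≤ C * (m₂ * (Real.pi * ρ ^ 2)) := by
      have base : (0:ℝ) ≤ K * m₂ * (σ ^ 2 * ρ ^ 2) :=
        mul_nonneg (mul_nonneg hK0 hm₂nn) (mul_nonneg (sq_nonneg σ) (sq_nonneg ρ))
      have h4 := mul_le_mul_of_nonneg_left hπ base
      rw [hC]
      calc K * m₂ * (σ ^ 2 * ρ ^ 2) = K * m₂ * (σ ^ 2 * ρ ^ 2) * 1 := by ring
        _ ≤ K * m₂ * (σ ^ 2 * ρ ^ 2) * Real.pi := h4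
        _ = K * σ ^ 2 * (m₂ * (Real.pi * ρ ^ 2)) := by ring
    calc M * h * h ^ 2 ≤ M * h ^ 2 := s1
      _ ≤ K * m₂ * (σ ^ 2 * ρ ^ 2) := s2
      _ ≤ C * (m₂ * (Real.pi * ρ ^ 2)) := s3
  have hfinal : M * h ≤ C * h⁻¹ ^ 2 * (m₂ * (Real.pi * ρ ^ 2)) := by
    have hd : M * h ≤ C * (m₂ * (Real.pi * ρ ^ 2)) / h ^ 2 :=
      (le_div_iff₀ (pow_pos hpos 2)).2 step
    calc M * h ≤ C * (m₂ * (Real.pi * ρ ^ 2)) / h ^ 2 := hd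
      _ = C * h⁻¹ ^ 2 * (m₂ * (Real.pi * ρ ^ 2)) := by rw [inv_pow]; ring
  have hCnn : (0:ℝ) ≤ C * h⁻¹ ^ 2 := by
    rw [hC]
    exact mul_nonneg (mul_nonneg hK0 (sq_nonneg σ)) (sq_nonneg h⁻¹)
  calc L ≤ M * h := hLbound
    _ ≤ C * h⁻¹ ^ 2 * (m₂ * (Real.pi * ρ ^ 2)) := hfinal
    _ ≤ C * h⁻¹ ^ 2 * R := mul_le_mul_of_nonneg_left hXR hCnn
end

section
/- Adopt the single-element weak Galerkin setup: T ⊂ ℝ² is an open triangle; V₀ is a finite-dimensional space of functions that are C¹ on a neighborhood of the closure of T; G = {∇v : v ∈ V₀}, regarded as a finite-dimensional subspace of L²(T; ℝ²); B is a finite-dimensional subspace of L²(∂T, H¹); Q₀ is the orthogonal projection of L²(T) onto V₀; Q_b is the orthogonal projection of L²(∂T) onto B; 𝒬 is the orthogonal projection of L²(T; ℝ²) onto G; and for v₀ ∈ V₀, v_b ∈ B the discrete weak gradient ∇_w(v₀, v_b) is the unique element of G satisfying (∇_w(v₀,v_b), q)_{L²(T)} = (∇v₀, q)_{L²(T)}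 - ⟨Q_b(v₀|_{∂T}) - v_b, q·n⟩_{L²(∂T)} for all q ∈ G, where n is the outward unit normal of T. Then for every function u of class C¹ on a neighborhood of the closure of T and every q ∈ G: (∇_w(Q₀u, Q_b(u|_{∂T})), q)_{L²(T)} = (𝒬(∇u), q)_{L²(T)} + (∇(Q₀u) - ∇u, q)_{L²(T)} - ⟨Q_b((Q₀u)|_{∂T}) - Q_b(u|_{∂T}), q·n⟩_{L²(∂T)}. -/
open MeasureTheory RealInnerProductSpace

section Aux
open InnerProductSpace

lemma grad_contOn {W : Set (EuclideanSpace ℝ (Fin 2))} (hW : IsOpen W)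
    {f : EuclideanSpace ℝ (Fin 2) → ℝ} (hf : ContDiffOn ℝ 1 f W) :
    ContinuousOn (fun x => gradient f x) W := by
  have h1 : ContinuousOn (fun x => fderiv ℝ f x) W :=
    hf.continuousOn_fderiv_of_isOpen hW le_rfl
  exact (LinearIsometryEquiv.continuous (toDual ℝ (EuclideanSpace ℝ (Fin 2))).symm).comp_continuousOn h1

end Aux

/-- Commuting (exchange) property of the discrete weak gradient (Lemma 5.1).
`T` is an open triangle, `V₀` a finite-dimensional space of functions `C¹` on a
neighborhood of `cl T`, `G = {∇v : v ∈ V₀}`, `B` a finite-dimensional boundary space,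
`ν` the outward unit normal of `T`.  With `u₀ = Q₀u`, `ub = Q_b(u|_{∂T})`,
`u0b = Q_b(u₀|_{∂T})`, `p = 𝒬(∇u)` and `g = ∇_w(Q₀u, Q_b u)` characterized by the
orthogonality/defining relations (all projections formulated via `L²` orthogonality
relations, boundary integrals with respect to `H¹`), one has, for every `q = ∇v ∈ G`:
`(∇_w Q_h u, q)_T = (𝒬∇u, q)_T + (∇(Q₀u) - ∇u, q)_T - ⟨Q_b(Q₀u) - Q_b u, q·ν⟩_{∂T}`. -/
theorem stmt_9
    (P : Fin 3 → EuclideanSpace ℝ (Fin 2)) (hP : AffineIndependent ℝ P)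
    (T : Set (EuclideanSpace ℝ (Fin 2))) (hT : T = interior (convexHull ℝ (Set.range P)))
    -- `V₀`: a finite-dimensional space of functions `C¹` on a neighborhood `W` of `cl T`
    (V₀ : Submodule ℝ (EuclideanSpace ℝ (Fin 2) → ℝ)) (hV₀fin : FiniteDimensional ℝ V₀)
    (W : Set (EuclideanSpace ℝ (Fin 2))) (hW : IsOpen W) (hTW : closure T ⊆ W)
    (hV₀C1 : ∀ v ∈ V₀, ContDiffOn ℝ 1 v W)
    -- `B`: a finite-dimensional boundary space
    (B : Submodule ℝ (EuclideanSpace ℝ (Fin 2) → ℝ)) (hBfin : FiniteDimensional ℝ B)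
    -- `ν`: the outward unit normal of `T` on `∂T`
    (ν : EuclideanSpace ℝ (Fin 2) → EuclideanSpace ℝ (Fin 2))
    -- `u`: of class `C¹` on the neighborhood `W` of `cl T`
    (u : EuclideanSpace ℝ (Fin 2) → ℝ) (hu : ContDiffOn ℝ 1 u W)
    -- `u₀ = Q₀ u`: the `L²(T)`-orthogonal projection of `u` onto `V₀`
    (u₀ : EuclideanSpace ℝ (Fin 2) → ℝ) (hu₀ : u₀ ∈ V₀)
    (hu₀proj : ∀ v ∈ V₀, ∫ x in T, (u x - u₀ x) * v x = 0)
    -- `ub = Q_b(u|_{∂T})`: the `L²(∂T, H¹)`-orthogonal projection of `u` onto `B`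
    (ub : EuclideanSpace ℝ (Fin 2) → ℝ) (hub : ub ∈ B)
    (hubproj : ∀ b ∈ B, ∫ x in frontier T, (u x - ub x) * b x ∂μH[1] = 0)
    -- `u0b = Q_b(u₀|_{∂T})`: the projection of `u₀` onto `B`
    (u0b : EuclideanSpace ℝ (Fin 2) → ℝ) (hu0b : u0b ∈ B)
    (hu0bproj : ∀ b ∈ B, ∫ x in frontier T, (u₀ x - u0b x) * b x ∂μH[1] = 0)
    -- `p = 𝒬(∇u)`: the `L²(T; ℝ²)`-orthogonal projection of `∇u` onto `G = ∇V₀`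
    (p : EuclideanSpace ℝ (Fin 2) → EuclideanSpace ℝ (Fin 2))
    (hpG : ∃ v ∈ V₀, p = fun x => gradient v x)
    (hpproj : ∀ v ∈ V₀, ∫ x in T, ⟪gradient u x - p x, gradient v x⟫ = 0)
    -- `g = ∇_w(u₀, ub)`: the discrete weak gradient, defined by its relation on `G`
    (g : EuclideanSpace ℝ (Fin 2) → EuclideanSpace ℝ (Fin 2))
    (hgG : ∃ v ∈ V₀, g = fun x => gradient v x)
    (hgdef : ∀ v ∈ V₀,
      (∫ x in T, ⟪g x, gradient v x⟫) =
        (∫ x in T, ⟪gradient u₀ x, gradient v x⟫)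
          - ∫ x in frontier T, (u0b x - ub x) * ⟪gradient v x, ν x⟫ ∂μH[1]) :
    ∀ v ∈ V₀,
      (∫ x in T, ⟪g x, gradient v x⟫) =
        (∫ x in T, ⟪p x, gradient v x⟫)
          + (∫ x in T, ⟪gradient u₀ x - gradient u x, gradient v x⟫)
          - ∫ x in frontier T, (u0b x - ub x) * ⟪gradient v x, ν x⟫ ∂μH[1] := by
  intro v hv
  -- compactness of `closure T`
  have hKhull : IsCompact (convexHull ℝ (Set.range P)) :=
    (Set.finite_range P).isCompact_convexHull ℝ
  have hK : IsCompact (closure T) := by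
    refine hKhull.of_isClosed_subset isClosed_closure ?_
    rw [hT]
    exact closure_minimal interior_subset hKhull.isClosed
  have hTsub : T ⊆ closure T := subset_closure
  -- continuity of the relevant gradients on `W`
  have hgv : ContinuousOn (fun x => gradient v x) W := grad_contOn hW (hV₀C1 v hv)
  have hgu : ContinuousOn (fun x => gradient u x) W := grad_contOn hW hu
  have hgu₀ : ContinuousOn (fun x => gradient u₀ x) W := grad_contOn hW (hV₀C1 u₀ hu₀)
  have hpc : ContinuousOn p W := by
    obtain ⟨w, hw, rfl⟩ := hpG
    exact grad_contOn hW (hV₀C1 w hw)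
  -- integrability on `T`
  have hint : ∀ f g : EuclideanSpace ℝ (Fin 2) → EuclideanSpace ℝ (Fin 2),
      ContinuousOn f W → ContinuousOn g W →
      IntegrableOn (fun x => ⟪f x, g x⟫) T volume := by
    intro f g hf hg
    have : ContinuousOn (fun x => ⟪f x, g x⟫) (closure T) :=
      ((hf.mono hTW).inner (hg.mono hTW))
    exact (this.integrableOn_compact hK).mono_set hTsub
  have h1 : IntegrableOn (fun x => ⟪p x, gradient v x⟫) T volume := hint _ _ hpc hgv
  have h2 : IntegrableOn (fun x => ⟪gradient u₀ x - gradient u x, gradient v x⟫) T volume :=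
    hint _ _ (hgu₀.sub hgu) hgv
  have h3 : IntegrableOn (fun x => ⟪gradient u x - p x, gradient v x⟫) T volume :=
    hint _ _ (hgu.sub hpc) hgv
  have key : (∫ x in T, ⟪gradient u₀ x, gradient v x⟫) =
      (∫ x in T, ⟪p x, gradient v x⟫)
        + ∫ x in T, ⟪gradient u₀ x - gradient u x, gradient v x⟫ := by
    have hsplit : (∫ x in T, ⟪gradient u₀ x, gradient v x⟫) =
        ∫ x in T, (⟪p x, gradient v x⟫ + ⟪gradient u₀ x - gradient u x, gradient v x⟫)
          + ⟪gradient u x - p x, gradient v x⟫ := by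
      apply integral_congr_ae
      filter_upwards with x
      simp only [inner_sub_left]
      ring
    have e3 : (∫ x in T, (⟪p x, gradient v x⟫
          + ⟪gradient u₀ x - gradient u x, gradient v x⟫)
          + ⟪gradient u x - p x, gradient v x⟫) =
        (∫ x in T, ⟪p x, gradient v x⟫
          + ⟪gradient u₀ x - gradient u x, gradient v x⟫)
          + ∫ x in T, ⟪gradient u x - p x, gradient v x⟫ :=
      integral_add (h1.add h2) h3
    have e2 : (∫ x in T, ⟪p x, gradient v x⟫
          + ⟪gradient u₀ x - gradient u x, gradient v x⟫) =
        (∫ x in T, ⟪p x, gradient v x⟫)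
          + ∫ x in T, ⟪gradient u₀ x - gradient u x, gradient v x⟫ :=
      integral_add h1 h2
    rw [hsplit, e3, e2, hpproj v hv, add_zero]
  rw [hgdef v hv, key]
end
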